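/- There exists μ₀ ∈ (0,1), depending only on α, with the following property (invariance of the unstable cones of angle μ under the slow-down flow): for every μ ∈ (μ₀,1), every Katok slow-down function ψ, every solution s=(s₁,s₂):[0,T]→ℝ² of the slow-down system with s₁(t)²+s₂(t)² ≤ 1 for all t, and every differentiable solution (ζ₁,ζ₂):[0,T]→ℝ² of the variational equations dζ₁/dt = (log λ)·((ψ(u)+2s₁²ψ'(u))ζ₁ + 2s₁s₂ψ'(u)ζ₂), dζ₂/dt = −(log λ)·(2s₁s₂ψ'(u)ζ₁ + (ψ(u)+2s₂²ψ'(u))ζ₂) (where u = s₁(t)²+s₂(t)²), if |ζ₂(0)| ≤ μ·|ζ₁(0)| and (ζ₁(0),ζ₂(0)) ≠ (0,0), then |ζ₂(t)| ≤ μ·|ζ₁(t)| for all t∈[0,T]. -/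

import Mathlib

open Set

lemma katok_psi_facts {α r₀ : ℝ} (hα : 0 < α) (hα1 : α < 1) (hr₀ : 0 < r₀) (hr₀1 : r₀ < 1)
    {ψ ψ' : ℝ → ℝ}
    (hderiv : ∀ u ∈ Ioc (0:ℝ) 1, HasDerivAt ψ (ψ' u) u)
    (hone : ∀ u : ℝ, r₀ ≤ u → u ≤ 1 → ψ u = 1)
    (hpos : ∀ u ∈ Ioo (0:ℝ) r₀, 0 < ψ' u)
    (hanti : AntitoneOn ψ' (Ioo (0:ℝ) r₀))
    (hpow : ∀ u : ℝ, 0 ≤ u → u ≤ r₀ / 2 → ψ u = (u / r₀) ^ α) :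
    ψ 0 = 0 ∧ (∀ u : ℝ, 0 < u → u ≤ 1 → 0 < ψ u) ∧ (∀ u : ℝ, 0 < u → u ≤ 1 → 0 ≤ ψ' u) ∧
    (∀ u : ℝ, 0 < u → u ≤ 1 → u * ψ' u ≤ 2 * ψ u) ∧ ContinuousOn ψ (Icc 0 1) := by
  have hhalfpos : (0:ℝ) < r₀ / 2 := by linarith
  have hhalf : r₀ / 2 / r₀ = (1:ℝ)/2 := by field_simp
  -- ψ 0 = 0
  have hψ0 : ψ 0 = 0 := by
    rw [hpow 0 le_rfl (by linarith), zero_div, Real.zero_rpow hα.ne']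
  -- derivative of the power function
  have hφ : ∀ u : ℝ, 0 < u → HasDerivAt (fun v : ℝ => (v / r₀) ^ α)
      (α * (u / r₀) ^ (α - 1) / r₀) u := by
    intro u hu
    have h1 : HasDerivAt (fun v : ℝ => v / r₀) (1 / r₀) u := by
      simpa using (hasDerivAt_id u).div_const r₀
    have h2 : HasDerivAt (fun x : ℝ => x ^ α) (α * (u / r₀) ^ (α - 1)) (u / r₀) :=
      Real.hasDerivAt_rpow_const (Or.inl (by positivity))
    have := h2.comp u h1
    refine this.congr_deriv ?_
    ring
  -- ψ' = 0 on [r₀, 1]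
  have hd0 : ∀ u : ℝ, r₀ ≤ u → u ≤ 1 → ψ' u = 0 := by
    intro u h1 h2
    have hU : UniqueDiffWithinAt ℝ (Icc r₀ 1) u := (uniqueDiffOn_Icc hr₀1) u ⟨h1, h2⟩
    have hA : HasDerivWithinAt ψ (ψ' u) (Icc r₀ 1) u :=
      (hderiv u ⟨lt_of_lt_of_le hr₀ h1, h2⟩).hasDerivWithinAt
    have hB : HasDerivWithinAt ψ 0 (Icc r₀ 1) u :=
      (hasDerivWithinAt_const (c := (1:ℝ)) ..).congr (fun x hx => hone x hx.1 hx.2)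
        (hone u h1 h2)
    rw [← hA.derivWithin hU, hB.derivWithin hU]
  -- ψ' formula on (0, r₀/2]
  have hdpow : ∀ u : ℝ, 0 < u → u ≤ r₀ / 2 → ψ' u = α * (u / r₀) ^ (α - 1) / r₀ := by
    intro u hu hle
    have hU : UniqueDiffWithinAt ℝ (Icc 0 (r₀/2)) u := (uniqueDiffOn_Icc hhalfpos) u ⟨hu.le, hle⟩
    have hA : HasDerivWithinAt ψ (ψ' u) (Icc 0 (r₀/2)) u :=
      (hderiv u ⟨hu, by linarith⟩).hasDerivWithinAt
    have hB : HasDerivWithinAt ψ (α * (u / r₀) ^ (α - 1) / r₀) (Icc 0 (r₀/2)) u :=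
      ((hφ u hu).hasDerivWithinAt).congr (fun x hx => hpow x hx.1 hx.2) (hpow u hu.le hle)
    rw [← hA.derivWithin hU, hB.derivWithin hU]
  -- continuity of ψ on [0,1]
  have hcont : ContinuousOn ψ (Icc 0 1) := by
    intro x hx
    rcases eq_or_lt_of_le hx.1 with h0 | h0
    · have hφc : ContinuousAt (fun v : ℝ => (v / r₀) ^ α) x := by
        exact (Real.continuousAt_rpow_const _ α (Or.inr hα.le)).comp
          ((continuous_id.div_const r₀).continuousAt)
      have heq : ∀ᶠ v in nhdsWithin x (Icc (0:ℝ) 1), ψ v = (v / r₀) ^ α := by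
        have hlt : ∀ᶠ v in nhdsWithin x (Icc (0:ℝ) 1), v < r₀ / 2 := by
          refine eventually_nhdsWithin_of_eventually_nhds ?_
          exact eventually_lt_nhds (by rw [← h0]; linarith)
        filter_upwards [self_mem_nhdsWithin, hlt] with v hv hv2
        exact hpow v hv.1 hv2.le
      exact (hφc.continuousWithinAt).congr_of_eventuallyEq heq
        (hpow x h0.le (by rw [← h0]; linarith))
    · exact ((hderiv x ⟨h0, hx.2⟩).continuousAt).continuousWithinAt
  -- monotonicity: ψ (r₀/2) ≤ ψ u for u ∈ [r₀/2, 1]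
  have hψhalf : ψ (r₀/2) = ((1:ℝ)/2) ^ α := by
    rw [hpow (r₀/2) hhalfpos.le le_rfl, hhalf]
  have hmono : ∀ u : ℝ, r₀/2 ≤ u → u ≤ 1 → ψ (r₀/2) ≤ ψ u := by
    intro u h1 h2
    rcases le_or_gt r₀ u with h3 | h3
    · rw [hone u h3 h2, hψhalf]
      exact Real.rpow_le_one (by norm_num) (by norm_num) hα.le
    · have hm : MonotoneOn ψ (Icc (r₀/2) r₀) := by
        apply monotoneOn_of_deriv_nonneg (convex_Icc _ _)
        · exact hcont.mono (Icc_subset_Icc (by linarith) hr₀1.le)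
        · intro x hx
          rw [interior_Icc] at hx
          exact ((hderiv x ⟨by linarith [hx.1], by linarith [hx.2]⟩).differentiableAt).differentiableWithinAt
        · intro x hx
          rw [interior_Icc] at hx
          rw [(hderiv x ⟨by linarith [hx.1], by linarith [hx.2]⟩).deriv]
          exact (hpos x ⟨by linarith [hx.1], hx.2⟩).le
      exact hm ⟨le_rfl, by linarith⟩ ⟨h1, h3.le⟩ h1
  -- positivity of ψ
  have hψpos : ∀ u : ℝ, 0 < u → u ≤ 1 → 0 < ψ u := by
    intro u hu h1
    rcases le_or_gt u (r₀/2) with h2 | h2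
    · rw [hpow u hu.le h2]
      exact Real.rpow_pos_of_pos (by positivity) α
    · calc (0:ℝ) < ((1:ℝ)/2) ^ α := Real.rpow_pos_of_pos (by norm_num) α
        _ = ψ (r₀/2) := hψhalf.symm
        _ ≤ ψ u := hmono u h2.le h1
  -- nonnegativity of ψ'
  have hψ'nn : ∀ u : ℝ, 0 < u → u ≤ 1 → 0 ≤ ψ' u := by
    intro u hu h1
    rcases lt_or_ge u r₀ with h2 | h2
    · exact (hpos u ⟨hu, h2⟩).le
    · rw [hd0 u h2 h1]
  -- key inequality
  have hkey : ∀ u : ℝ, 0 < u → u ≤ 1 → u * ψ' u ≤ 2 * ψ u := by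
    intro u hu h1
    rcases le_or_gt u (r₀/2) with h2 | h2
    · rw [hdpow u hu h2, hpow u hu.le h2]
      have hx : (0:ℝ) < u / r₀ := by positivity
      have hxx : (u/r₀) ^ (α-1) * (u/r₀) = (u/r₀) ^ α := by
        rw [← Real.rpow_add_one hx.ne' (α - 1)]
        norm_num
      calc u * (α * (u/r₀) ^ (α-1) / r₀) = α * ((u/r₀) ^ (α-1) * (u/r₀)) := by ring
        _ = α * (u/r₀) ^ α := by rw [hxx]
        _ ≤ 2 * (u/r₀) ^ α := by nlinarith [Real.rpow_nonneg hx.le α]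
    · rcases lt_or_ge u r₀ with h3 | h3
      · have e1 : ψ' u ≤ ψ' (r₀/2) :=
          hanti ⟨hhalfpos, by linarith⟩ ⟨by linarith, h3⟩ h2.le
        have e0 : 0 ≤ ψ' u := (hpos u ⟨hu, h3⟩).le
        have e2 : ψ' (r₀/2) = α * ((1:ℝ)/2) ^ (α-1) / r₀ := by
          rw [hdpow (r₀/2) hhalfpos le_rfl, hhalf]
        have e3 : ((1:ℝ)/2) ^ (α-1) = 2 * ((1:ℝ)/2) ^ α := by
          rw [Real.rpow_sub (by norm_num : (0:ℝ) < 1/2), Real.rpow_one]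
          ring
        have e4 : ψ (r₀/2) ≤ ψ u := hmono u h2.le h1
        have e5 : (0:ℝ) ≤ ((1:ℝ)/2) ^ α := Real.rpow_nonneg (by norm_num) α
        calc u * ψ' u ≤ r₀ * ψ' (r₀/2) := by nlinarith
          _ = 2 * α * ((1:ℝ)/2) ^ α := by rw [e2, e3]; field_simp
          _ = 2 * α * ψ (r₀/2) := by rw [hψhalf]
          _ ≤ 2 * 1 * ψ u := by nlinarith [hψpos u hu h1]
          _ = 2 * ψ u := by ring
      · rw [hd0 u h3 h1]
        have := hψpos u hu h1
        nlinarith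
  exact ⟨hψ0, hψpos, hψ'nn, hkey, hcont⟩

/-- Positive semidefiniteness of the cone quadratic form. -/
lemma cone_quad_nonneg {μ p q a b x y : ℝ} (hμ₀ : 3/4 < μ) (hμ1 : μ < 1)
    (hp : 0 < p) (hq : 0 ≤ q) (hk : a ^ 2 * q ≤ 2 * p) :
    0 ≤ μ ^ 2 * p * x ^ 2 +
      q * (μ ^ 2 * a ^ 2 * x ^ 2 + (1 + μ ^ 2) * a * b * x * y + b ^ 2 * y ^ 2) := by
  have haq : 0 ≤ a ^ 2 * q := mul_nonneg (sq_nonneg a) hq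
  have hv1 : 9/16 < μ ^ 2 := by nlinarith
  have hv2 : μ ^ 2 ≤ 1 := by nlinarith
  have hmu : (1 - μ ^ 2) ^ 2 ≤ 2 * μ ^ 2 := by
    nlinarith [mul_nonneg (by linarith : (0:ℝ) ≤ μ ^ 2 - 9/16)
      (by linarith : (0:ℝ) ≤ 55/16 - μ ^ 2)]
  have h1 : (1 - μ ^ 2) ^ 2 * (a ^ 2 * q) ≤ 2 * μ ^ 2 * (a ^ 2 * q) :=
    mul_le_mul_of_nonneg_right hmu haq
  have h2 : 2 * μ ^ 2 * (a ^ 2 * q) ≤ 2 * μ ^ 2 * (2 * p) :=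
    mul_le_mul_of_nonneg_left hk (by positivity)
  have hkey2 : 0 ≤ 4 * μ ^ 2 * p - (1 - μ ^ 2) ^ 2 * a ^ 2 * q := by nlinarith
  have hA : 0 < μ ^ 2 * p + μ ^ 2 * a ^ 2 * q := by
    have h5 : (0:ℝ) < μ ^ 2 := by linarith
    have h6 : 0 < μ ^ 2 * p := mul_pos h5 hp
    have h7 : 0 ≤ μ ^ 2 * (a ^ 2 * q) := mul_nonneg h5.le haq
    nlinarith [h6, h7]
  have hsos : 0 ≤ (2 * (μ ^ 2 * p + μ ^ 2 * a ^ 2 * q) * x + (1 + μ ^ 2) * a * b * q * y) ^ 2 :=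
    sq_nonneg _
  have hrest : 0 ≤ b ^ 2 * q * (4 * μ ^ 2 * p - (1 - μ ^ 2) ^ 2 * a ^ 2 * q) * y ^ 2 :=
    mul_nonneg (mul_nonneg (mul_nonneg (sq_nonneg b) hq) hkey2) (sq_nonneg y)
  have h4 : 0 ≤ 4 * (μ ^ 2 * p + μ ^ 2 * a ^ 2 * q) *
      (μ ^ 2 * p * x ^ 2 +
        q * (μ ^ 2 * a ^ 2 * x ^ 2 + (1 + μ ^ 2) * a * b * x * y + b ^ 2 * y ^ 2)) := by
    rw [show 4 * (μ ^ 2 * p + μ ^ 2 * a ^ 2 * q) *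
      (μ ^ 2 * p * x ^ 2 +
        q * (μ ^ 2 * a ^ 2 * x ^ 2 + (1 + μ ^ 2) * a * b * x * y + b ^ 2 * y ^ 2)) =
      (2 * (μ ^ 2 * p + μ ^ 2 * a ^ 2 * q) * x + (1 + μ ^ 2) * a * b * q * y) ^ 2 +
      b ^ 2 * q * (4 * μ ^ 2 * p - (1 - μ ^ 2) ^ 2 * a ^ 2 * q) * y ^ 2 from by ring]
    exact add_nonneg hsos hrest
  nlinarith [h4, hA]

set_option maxHeartbeats 2000000 in
/-- Lemma `cone_invar1` of "Thermodynamics of the Katok Map" (flow version):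
there exists `μ₀ ∈ (0,1)`, depending only on `α`, such that for every
`μ ∈ (μ₀,1)` the unstable cone `{|ζ₂| ≤ μ |ζ₁|}` is invariant under the
variational flow of the Katok slow-down system, for every Katok slow-down
function `ψ`. -/
theorem unstable_cone_invariance :
    ∀ α : ℝ, 0 < α → α < 1 →
    ∃ μ₀ : ℝ, 0 < μ₀ ∧ μ₀ < 1 ∧
    ∀ lam r₀ μ : ℝ, 1 < lam → 0 < r₀ → r₀ < 1 → μ₀ < μ → μ < 1 →
    ∀ ψ ψ' : ℝ → ℝ,
      (∀ u ∈ Icc (0:ℝ) 1, ψ u ∈ Icc (0:ℝ) 1) →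
      (∀ u ∈ Ioc (0:ℝ) 1, HasDerivAt ψ (ψ' u) u) →
      (∀ u : ℝ, r₀ ≤ u → u ≤ 1 → ψ u = 1) →
      (∀ u ∈ Ioo (0:ℝ) r₀, 0 < ψ' u) →
      AntitoneOn ψ' (Ioo (0:ℝ) r₀) →
      (∀ u : ℝ, 0 ≤ u → u ≤ r₀ / 2 → ψ u = (u / r₀) ^ α) →
    ∀ T : ℝ, 0 ≤ T →
    ∀ s₁ s₂ : ℝ → ℝ,
      (∀ t ∈ Icc (0:ℝ) T,
        HasDerivAt s₁ (s₁ t * ψ (s₁ t ^ 2 + s₂ t ^ 2) * Real.log lam) t) →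
      (∀ t ∈ Icc (0:ℝ) T,
        HasDerivAt s₂ (-(s₂ t * ψ (s₁ t ^ 2 + s₂ t ^ 2) * Real.log lam)) t) →
      (∀ t ∈ Icc (0:ℝ) T, s₁ t ^ 2 + s₂ t ^ 2 ≤ 1) →
    ∀ ζ₁ ζ₂ : ℝ → ℝ,
      (∀ t ∈ Icc (0:ℝ) T,
        HasDerivAt ζ₁ (Real.log lam *
          ((ψ (s₁ t ^ 2 + s₂ t ^ 2) + 2 * s₁ t ^ 2 * ψ' (s₁ t ^ 2 + s₂ t ^ 2)) * ζ₁ t +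
            2 * s₁ t * s₂ t * ψ' (s₁ t ^ 2 + s₂ t ^ 2) * ζ₂ t)) t) →
      (∀ t ∈ Icc (0:ℝ) T,
        HasDerivAt ζ₂ (-(Real.log lam *
          (2 * s₁ t * s₂ t * ψ' (s₁ t ^ 2 + s₂ t ^ 2) * ζ₁ t +
            (ψ (s₁ t ^ 2 + s₂ t ^ 2) + 2 * s₂ t ^ 2 * ψ' (s₁ t ^ 2 + s₂ t ^ 2)) * ζ₂ t))) t) →
      |ζ₂ 0| ≤ μ * |ζ₁ 0| → (ζ₁ 0, ζ₂ 0) ≠ (0, 0) →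
      ∀ t ∈ Icc (0:ℝ) T, |ζ₂ t| ≤ μ * |ζ₁ t| := by
  intro α hα hα1
  refine ⟨3/4, by norm_num, by norm_num, ?_⟩
  intro lam r₀ μ hlam hr₀ hr₀1 hμ₀ hμ1
  intro ψ ψ' hmem hderiv hone hpos hanti hpow
  intro T hT s₁ s₂ hs₁ hs₂ hsle
  intro ζ₁ ζ₂ hζ₁ hζ₂ h0 _hne
  have hμpos : (0:ℝ) < μ := by linarith
  have hL : 0 < Real.log lam := Real.log_pos hlam
  obtain ⟨hψ0, hψpos, hψ'nn, hkey, hψcont⟩ :=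
    katok_psi_facts hα hα1 hr₀ hr₀1 hderiv hone hpos hanti hpow
  set L := Real.log lam with hLdef
  clear_value L
  -- continuity of the data
  have cs₁ : ContinuousOn s₁ (Icc 0 T) := fun t ht => ((hs₁ t ht).continuousAt).continuousWithinAt
  have cs₂ : ContinuousOn s₂ (Icc 0 T) := fun t ht => ((hs₂ t ht).continuousAt).continuousWithinAt
  have cζ₁ : ContinuousOn ζ₁ (Icc 0 T) := fun t ht => ((hζ₁ t ht).continuousAt).continuousWithinAt
  have cζ₂ : ContinuousOn ζ₂ (Icc 0 T) := fun t ht => ((hζ₂ t ht).continuousAt).continuousWithinAt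
  have cu : ContinuousOn (fun t => s₁ t ^ 2 + s₂ t ^ 2) (Icc 0 T) :=
    (cs₁.pow 2).add (cs₂.pow 2)
  have humem : ∀ t ∈ Icc (0:ℝ) T, s₁ t ^ 2 + s₂ t ^ 2 ∈ Icc (0:ℝ) 1 :=
    fun t ht => ⟨by positivity, hsle t ht⟩
  set f : ℝ → ℝ := fun t => 2 * L * ψ (s₁ t ^ 2 + s₂ t ^ 2) with hfdef
  clear_value f
  have cf : ContinuousOn f (Icc 0 T) := by
    rw [hfdef]
    exact continuousOn_const.mul (hψcont.comp cu humem)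
  set F : ℝ → ℝ := fun t => ∫ s in (0:ℝ)..t, f s with hFdef
  clear_value F
  have cF : ContinuousOn F (Icc 0 T) := by
    have h1 : MeasureTheory.IntegrableOn f (uIcc 0 T) := by
      rw [uIcc_of_le hT]; exact cf.integrableOn_Icc
    have h2 := intervalIntegral.continuousOn_primitive_interval h1
    rw [uIcc_of_le hT] at h2
    rw [hFdef]
    exact h2
  set g : ℝ → ℝ := fun t => μ ^ 2 * ζ₁ t ^ 2 - ζ₂ t ^ 2 with hgdef
  clear_value g
  have cg : ContinuousOn g (Icc 0 T) := by
    rw [hgdef]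
    exact (continuousOn_const.mul (cζ₁.pow 2)).sub (cζ₂.pow 2)
  set P : ℝ → ℝ := fun t => Real.exp (F t) * g t with hPdef
  clear_value P
  have cP : ContinuousOn P (Icc 0 T) := by
    rw [hPdef]
    exact (Real.continuous_exp.comp_continuousOn cF).mul cg
  -- derivative of P on the interior, with nonnegative value
  have hderivP : ∀ t ∈ Ioo (0:ℝ) T, ∃ v, HasDerivAt P v t ∧ 0 ≤ v := by
    intro t ht
    have htIcc : t ∈ Icc (0:ℝ) T := Ioo_subset_Icc_self ht
    -- FTC
    have hInt : IntervalIntegrable f MeasureTheory.volume 0 t := by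
      apply ContinuousOn.intervalIntegrable
      apply cf.mono
      rw [uIcc_of_le ht.1.le]
      exact Icc_subset_Icc le_rfl ht.2.le
    have hMeas : StronglyMeasurableAtFilter f (nhds t) MeasureTheory.volume :=
      ContinuousOn.stronglyMeasurableAtFilter isOpen_Ioo (cf.mono Ioo_subset_Icc_self) t ht
    have hContAt : ContinuousAt f t := cf.continuousAt (Icc_mem_nhds ht.1 ht.2)
    have hF' : HasDerivAt F (f t) t := by
      rw [hFdef]
      exact intervalIntegral.integral_hasDerivAt_right hInt hMeas hContAt
    -- derivative of g
    have hz1 := hζ₁ t htIcc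
    have hz2 := hζ₂ t htIcc
    have hg'raw := ((hz1.pow 2).const_mul (μ ^ 2)).sub (hz2.pow 2)
    have hg' : HasDerivAt g (μ ^ 2 *
          (↑2 * ζ₁ t ^ (2 - 1) *
            (L * ((ψ (s₁ t ^ 2 + s₂ t ^ 2) + 2 * s₁ t ^ 2 * ψ' (s₁ t ^ 2 + s₂ t ^ 2)) * ζ₁ t +
              2 * s₁ t * s₂ t * ψ' (s₁ t ^ 2 + s₂ t ^ 2) * ζ₂ t))) -
        ↑2 * ζ₂ t ^ (2 - 1) *
          -(L * (2 * s₁ t * s₂ t * ψ' (s₁ t ^ 2 + s₂ t ^ 2) * ζ₁ t +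
            (ψ (s₁ t ^ 2 + s₂ t ^ 2) + 2 * s₂ t ^ 2 * ψ' (s₁ t ^ 2 + s₂ t ^ 2)) * ζ₂ t))) t := by
      rw [hgdef]
      exact hg'raw
    have hP' := hF'.exp.mul hg'
    set p := ψ (s₁ t ^ 2 + s₂ t ^ 2) with hp
    set q := ψ' (s₁ t ^ 2 + s₂ t ^ 2) with hq
    set a := s₁ t with hadef
    set b := s₂ t with hbdef
    set x := ζ₁ t with hxdef
    set y := ζ₂ t with hydef
    clear_value p q a b x y
    have hft : f t = 2 * L * p := by
      rw [hfdef, hp, hadef, hbdef]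
    have hQ : 0 ≤ μ ^ 2 * p * x ^ 2 +
        q * (μ ^ 2 * a ^ 2 * x ^ 2 + (1 + μ ^ 2) * a * b * x * y + b ^ 2 * y ^ 2) := by
      rcases eq_or_lt_of_le (by positivity : (0:ℝ) ≤ a ^ 2 + b ^ 2) with h00 | h00
      · have ha : a = 0 := by nlinarith [sq_nonneg a, sq_nonneg b]
        have hb : b = 0 := by nlinarith [sq_nonneg a, sq_nonneg b]
        have hp0 : p = 0 := by rw [hp, ha, hb]; simpa using hψ0
        rw [hp0, ha, hb]; norm_num
      · have hu1 : a ^ 2 + b ^ 2 ≤ 1 := by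
          rw [hadef, hbdef]; exact hsle t htIcc
        have hppos : 0 < p := by rw [hp]; exact hψpos _ h00 hu1
        have hqnn : 0 ≤ q := by rw [hq]; exact hψ'nn _ h00 hu1
        have hk0 : (a ^ 2 + b ^ 2) * q ≤ 2 * p := by
          rw [hp, hq]; exact hkey _ h00 hu1
        have haq : a ^ 2 * q ≤ 2 * p := by nlinarith [mul_nonneg (sq_nonneg b) hqnn]
        exact cone_quad_nonneg hμ₀ hμ1 hppos hqnn haq
    have hP2 : HasDerivAt P (Real.exp (F t) * (4 * L * (μ ^ 2 * p * x ^ 2 +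
        q * (μ ^ 2 * a ^ 2 * x ^ 2 + (1 + μ ^ 2) * a * b * x * y + b ^ 2 * y ^ 2)))) t := by
      refine (show HasDerivAt P _ t by rw [hPdef]; exact hP').congr_deriv ?_
      rw [hft]
      simp only [hgdef, ← hxdef, ← hydef]
      push_cast
      ring
    refine ⟨_, hP2, ?_⟩
    have h4L : (0:ℝ) ≤ 4 * L := by linarith
    exact mul_nonneg (Real.exp_pos _).le (mul_nonneg h4L hQ)
  -- monotonicity of P
  have hMono : MonotoneOn P (Icc 0 T) := by
    apply monotoneOn_of_deriv_nonneg (convex_Icc 0 T) cP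
    · intro z hz
      rw [interior_Icc] at hz
      obtain ⟨v, hv, _⟩ := hderivP z hz
      exact hv.differentiableAt.differentiableWithinAt
    · intro z hz
      rw [interior_Icc] at hz
      obtain ⟨v, hv, hv0⟩ := hderivP z hz
      rw [hv.deriv]
      exact hv0
  -- conclusion
  intro t ht
  have h00 : (0:ℝ) ∈ Icc 0 T := left_mem_Icc.mpr hT
  have hg0 : 0 ≤ g 0 := by
    have h1 : |ζ₂ 0| * |ζ₂ 0| ≤ (μ * |ζ₁ 0|) * (μ * |ζ₁ 0|) :=
      mul_self_le_mul_self (abs_nonneg _) h0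
    have h2 := sq_abs (ζ₁ 0)
    have h3 := sq_abs (ζ₂ 0)
    simp only [hgdef]
    nlinarith [h1, h2, h3]
  have hP0 : 0 ≤ P 0 := by
    have hF0 : F 0 = 0 := by rw [hFdef]; exact intervalIntegral.integral_same
    simp only [hPdef]
    rw [hF0, Real.exp_zero, one_mul]
    exact hg0
  have hPt : P 0 ≤ P t := hMono h00 ht ht.1
  have hgt : 0 ≤ g t := by
    have hPt0 : 0 ≤ Real.exp (F t) * g t := by
      have := le_trans hP0 hPt
      simp only [hPdef] at this
      exact this
    nlinarith [Real.exp_pos (F t), hPt0]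
  have hgt' : 0 ≤ μ ^ 2 * ζ₁ t ^ 2 - ζ₂ t ^ 2 := by
    simp only [hgdef] at hgt
    exact hgt
  have hsq : ζ₂ t ^ 2 ≤ (μ * |ζ₁ t|) ^ 2 := by
    rw [mul_pow, sq_abs]
    linarith
  calc |ζ₂ t| = Real.sqrt (ζ₂ t ^ 2) := (Real.sqrt_sq_eq_abs _).symm
    _ ≤ Real.sqrt ((μ * |ζ₁ t|) ^ 2) := Real.sqrt_le_sqrt hsq
    _ = μ * |ζ₁ t| := Real.sqrt_sq (by positivity)
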